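/- A function h from admissible sets on [n] to the integers is equal to h_D for some delta-matroid D on [n] if and only if: (1) h(∅,∅) = 0; (2) h(S) ∈ {0,1} whenever |S| = 1; and (3) 2·h(S) + 2·h(T) ≥ 2·h(S ⊓ T) + 2·h(S ⊔ T) + |S⁺∩T⁻| + |S⁻∩T⁺| for all admissible S, T. -/

import Mathlib

open Finset
open scoped symmDiff

/-- The rank-type function of a nonempty family `G` of subsets of `Fin n`, evaluated on an
admissible set `(Sp, Sn)`: `max_{F ∈ G} (|Sp ∩ F| + |Sn \ F| − |Sn ∩ F| − |Sp \ F|)`.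
(Junk value `0` when the family is empty.) -/
noncomputable def gFam {n : ℕ} (G : Finset (Finset (Fin n))) (Sp Sn : Finset (Fin n)) : ℤ :=
  if h : G.Nonempty then
    G.sup' h fun F => ((Sp ∩ F).card : ℤ) + ((Sn \ F).card : ℤ)
      - ((Sn ∩ F).card : ℤ) - ((Sp \ F).card : ℤ)
  else 0

/-- A delta-matroid on `[n]`: a nonempty family of subsets of `Fin n` (each `F` encoding the
size-`n` admissible set `(F, [n] \ F)`), satisfying the symmetric exchange axiom. -/
structure DeltaMatroid (n : ℕ) where
  feas : Finset (Finset (Fin n))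
  nonempty : feas.Nonempty
  exchange : ∀ F₁ ∈ feas, ∀ F₂ ∈ feas, ∀ x ∈ F₁ ∆ F₂, ∃ y ∈ F₁ ∆ F₂, F₁ ∆ {x, y} ∈ feas

/-- The rank function `g_D` of a delta-matroid, on admissible sets `(Sp, Sn)`. -/
noncomputable def DeltaMatroid.g {n : ℕ} (D : DeltaMatroid n) :
    Finset (Fin n) → Finset (Fin n) → ℤ :=
  gFam D.feas

namespace DMChar
variable {n : ℕ}
def w (Sp Sn : Finset (Fin n)) (e : Fin n) : ℤ := if e ∈ Sp then 1 else if e ∈ Sn then -1 else 0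
def sg (F : Finset (Fin n)) (e : Fin n) : ℤ := if e ∈ F then 1 else -1
noncomputable def fz (F Sp Sn : Finset (Fin n)) : ℤ := ∑ e, w Sp Sn e * sg F e

lemma cardz (A : Finset (Fin n)) : (A.card : ℤ) = ∑ e, if e ∈ A then (1:ℤ) else 0 := by
  rw [Finset.sum_ite_mem, Finset.univ_inter, Finset.sum_const, nsmul_eq_mul, mul_one]

lemma fz_eq (F Sp Sn : Finset (Fin n)) (hd : Disjoint Sp Sn) :
    ((Sp ∩ F).card : ℤ) + ((Sn \ F).card : ℤ) - ((Sn ∩ F).card : ℤ) - ((Sp \ F).card : ℤ)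
      = fz F Sp Sn := by
  simp only [fz, cardz, ← Finset.sum_sub_distrib, ← Finset.sum_add_distrib]
  refine Finset.sum_congr rfl fun e _ => ?_
  have he : e ∈ Sp → e ∉ Sn := fun h1 h2 => Finset.disjoint_left.mp hd h1 h2
  simp only [w, sg, Finset.mem_inter, Finset.mem_sdiff]
  split_ifs <;> simp_all <;> omega
lemma sg_symmDiff (F X : Finset (Fin n)) (e : Fin n) :
    sg (F ∆ X) e = if e ∈ X then - sg F e else sg F e := by
  simp only [sg, Finset.mem_symmDiff]
  split_ifs <;> simp_all

lemma fz_symmDiff (F X Sp Sn : Finset (Fin n)) :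
    fz (F ∆ X) Sp Sn = fz F Sp Sn - 2 * ∑ e ∈ X, w Sp Sn e * sg F e := by
  unfold fz
  have : ∀ e ∈ univ (α := Fin n), w Sp Sn e * sg (F ∆ X) e
      = w Sp Sn e * sg F e - (if e ∈ X then 2 * (w Sp Sn e * sg F e) else 0) := by
    intro e _
    rw [sg_symmDiff]
    split_ifs <;> ring
  rw [Finset.sum_congr rfl this, Finset.sum_sub_distrib, Finset.sum_ite_mem, Finset.univ_inter,
    Finset.mul_sum]

lemma wsg_mem (Sp Sn F : Finset (Fin n)) (e : Fin n) :
    w Sp Sn e * sg F e = 1 ∨ w Sp Sn e * sg F e = 0 ∨ w Sp Sn e * sg F e = -1 := by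
  unfold w sg; split_ifs <;> norm_num

lemma wsg_le (Sp Sn F : Finset (Fin n)) (e : Fin n) : w Sp Sn e * sg F e ≤ 1 := by
  rcases wsg_mem Sp Sn F e with h | h | h <;> omega

variable (D : DeltaMatroid n)

lemma symmDiff_pair_mem {F G : Finset (Fin n)} {x y : Fin n} (hx : x ∈ F ∆ G) (hy : y ∈ F ∆ G) :
    (F ∆ {x, y}) ∆ G = (F ∆ G) \ {x, y} := by
  rw [symmDiff_assoc, symmDiff_comm ({x, y} : Finset (Fin n)) G, ← symmDiff_assoc,
    symmDiff_of_ge]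
  intro e he
  simp only [Finset.mem_insert, Finset.mem_singleton] at he
  rcases he with rfl | rfl <;> assumption

lemma card_lt_of_mem_sdiff {A B : Finset (Fin n)} {x : Fin n} (hx : x ∈ A) (hxB : x ∈ B) :
    (A \ B).card < A.card := by
  apply Finset.card_lt_card
  constructor
  · exact Finset.sdiff_subset
  · intro hsub
    have := hsub hx
    simp [hxB] at this

/-- LemA: strictly beneficial flip gives a closer maximizer. -/
lemma lemA {F G : Finset (Fin n)} (hF : F ∈ D.feas) (hG : G ∈ D.feas)
    {Up Un : Finset (Fin n)}
    (hmax : ∀ F' ∈ D.feas, fz F' Up Un ≤ fz F Up Un)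
    {x : Fin n} (hx : x ∈ F ∆ G) (hneg : w Up Un x * sg F x = -1) :
    ∃ F' ∈ D.feas, (∀ F'' ∈ D.feas, fz F'' Up Un ≤ fz F' Up Un) ∧
      (F' ∆ G).card < (F ∆ G).card := by
  obtain ⟨y, hy, hF'⟩ := D.exchange F hF G hG x hx
  by_cases hxy : y = x
  · subst hxy
    exfalso
    have h1 := hmax _ hF'
    have h2 : fz (F ∆ {y, y}) Up Un = fz F Up Un + 2 := by
      rw [fz_symmDiff]
      simp [hneg]
    omega
  · have hcard : fz (F ∆ {x, y}) Up Un = fz F Up Un + 2 - 2 * (w Up Un y * sg F y) := by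
      rw [fz_symmDiff, Finset.sum_pair (fun h => hxy h.symm), hneg]; ring
    have h1 := hmax _ hF'
    have h2 := wsg_le Up Un F y
    refine ⟨F ∆ {x, y}, hF', fun F'' h'' => ?_, ?_⟩
    · have := hmax _ h''; omega
    · rw [symmDiff_pair_mem hx hy]
      exact card_lt_of_mem_sdiff (Finset.mem_symmDiff.mpr (by
        rcases Finset.mem_symmDiff.mp hx with h | h
        · exact Or.inl h
        · exact Or.inr h)) (by simp)

/-- LemB: neutral flip gives a closer maximizer or a "blocking" element. -/
lemma lemB {F G : Finset (Fin n)} (hF : F ∈ D.feas) (hG : G ∈ D.feas)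
    {Up Un : Finset (Fin n)}
    (hmax : ∀ F' ∈ D.feas, fz F' Up Un ≤ fz F Up Un)
    {x : Fin n} (hx : x ∈ F ∆ G) (hzero : w Up Un x = 0) :
    (∃ F' ∈ D.feas, (∀ F'' ∈ D.feas, fz F'' Up Un ≤ fz F' Up Un) ∧
      (F' ∆ G).card < (F ∆ G).card) ∨
    (∃ y ∈ F ∆ G, w Up Un y * sg F y = 1) := by
  obtain ⟨y, hy, hF'⟩ := D.exchange F hF G hG x hx
  by_cases hxy : y = x
  · subst hxy
    left
    have h2 : fz (F ∆ {y, y}) Up Un = fz F Up Un := by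
      rw [fz_symmDiff]; simp [hzero]
    refine ⟨F ∆ {y, y}, hF', fun F'' h'' => by have := hmax _ h''; omega, ?_⟩
    rw [symmDiff_pair_mem hy hy]
    exact card_lt_of_mem_sdiff hy (by simp)
  · have hcard : fz (F ∆ {x, y}) Up Un = fz F Up Un - 2 * (w Up Un y * sg F y) := by
      rw [fz_symmDiff, Finset.sum_pair (fun h => hxy h.symm), hzero]; ring
    rcases wsg_mem Up Un F y with h | h | h
    · exact Or.inr ⟨y, hy, h⟩
    · left
      refine ⟨F ∆ {x, y}, hF', fun F'' h'' => by have := hmax _ h''; omega, ?_⟩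
      rw [symmDiff_pair_mem hx hy]
      exact card_lt_of_mem_sdiff hx (by simp)
    · exfalso
      have := hmax _ hF'
      omega


lemma sg_vals (F : Finset (Fin n)) (e : Fin n) : sg F e = 1 ∨ sg F e = -1 := by
  unfold sg; split_ifs <;> simp

/-- Common maximizer for nested admissible pairs. -/
lemma common_max (D : DeltaMatroid n) {Up Un Vp Vn : Finset (Fin n)}
    (hdV : Disjoint Vp Vn) (hp : Up ⊆ Vp) (hn : Un ⊆ Vn) :
    ∃ F ∈ D.feas, (∀ F' ∈ D.feas, fz F' Up Un ≤ fz F Up Un) ∧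
      (∀ F' ∈ D.feas, fz F' Vp Vn ≤ fz F Vp Vn) := by
  have hw : ∀ e : Fin n, w Up Un e ≠ 0 → w Vp Vn e = w Up Un e := by
    intro e he
    by_cases h1 : e ∈ Up
    · have : e ∈ Vp := hp h1
      simp [w, h1, this]
    · by_cases h2 : e ∈ Un
      · have hv : e ∈ Vn := hn h2
        have hv2 : e ∉ Vp := fun hh => Finset.disjoint_left.mp hdV hh hv
        simp [w, h1, h2, hv, hv2]
      · simp [w, h1, h2] at he
  classical
  obtain ⟨F0, hF0, hF0max⟩ := Finset.exists_max_image D.feas (fun F => fz F Up Un) D.nonempty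
  obtain ⟨G0, hG0, hG0max⟩ := Finset.exists_max_image D.feas (fun F => fz F Vp Vn) D.nonempty
  let P : Finset (Finset (Fin n) × Finset (Fin n)) :=
    (D.feas ×ˢ D.feas).filter (fun p =>
      (∀ F' ∈ D.feas, fz F' Up Un ≤ fz p.1 Up Un) ∧
      (∀ F' ∈ D.feas, fz F' Vp Vn ≤ fz p.2 Vp Vn))
  have memP : ∀ (F' G' : Finset (Fin n)), F' ∈ D.feas → G' ∈ D.feas →
      (∀ F'' ∈ D.feas, fz F'' Up Un ≤ fz F' Up Un) →
      (∀ F'' ∈ D.feas, fz F'' Vp Vn ≤ fz G' Vp Vn) → (F', G') ∈ P := by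
    intro F' G' h1 h2 h3 h4
    exact Finset.mem_filter.mpr ⟨Finset.mem_product.mpr ⟨h1, h2⟩, h3, h4⟩
  have hPne : P.Nonempty := ⟨(F0, G0), memP F0 G0 hF0 hG0 hF0max hG0max⟩
  obtain ⟨p, hpP, hpmin⟩ := Finset.exists_min_image P (fun p => (p.1 ∆ p.2).card) hPne
  obtain ⟨hprod, hmaxU, hmaxV⟩ := Finset.mem_filter.mp hpP
  obtain ⟨hF, hG⟩ := Finset.mem_product.mp hprod
  by_cases hFG : p.1 ∆ p.2 = ∅
  · have heq : p.1 = p.2 := symmDiff_eq_bot.mp hFG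
    exact ⟨p.1, hF, hmaxU, heq ▸ hmaxV⟩
  · exfalso
    obtain ⟨x, hx⟩ := Finset.nonempty_iff_ne_empty.mpr hFG
    have contraU : ∀ F' ∈ D.feas, (∀ F'' ∈ D.feas, fz F'' Up Un ≤ fz F' Up Un) →
        (F' ∆ p.2).card < (p.1 ∆ p.2).card → False := by
      intro F' h1 h2 h3
      have := hpmin (F', p.2) (memP F' p.2 h1 hG h2 hmaxV)
      simp only at this
      omega
    have contraV : ∀ G' ∈ D.feas, (∀ F'' ∈ D.feas, fz F'' Vp Vn ≤ fz G' Vp Vn) →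
        (G' ∆ p.1).card < (p.2 ∆ p.1).card → False := by
      intro G' h1 h2 h3
      have := hpmin (p.1, G') (memP p.1 G' hF h1 hmaxU h2)
      simp only at this
      rw [symmDiff_comm G' p.1, symmDiff_comm p.2 p.1] at h3
      omega
    have hxGF : x ∈ p.2 ∆ p.1 := by rwa [symmDiff_comm]
    have hsgFG : sg p.2 x = - sg p.1 x := by
      rcases Finset.mem_symmDiff.mp hx with ⟨h1, h2⟩ | ⟨h1, h2⟩ <;> simp [sg, h1, h2]
    by_cases hU : w Up Un x * sg p.1 x = -1
    · obtain ⟨F', h1, h2, h3⟩ := lemA D hF hG hmaxU hx hU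
      exact contraU F' h1 h2 h3
    by_cases hV : w Vp Vn x * sg p.2 x = -1
    · obtain ⟨G', h1, h2, h3⟩ := lemA D hG hF hmaxV hxGF hV
      exact contraV G' h1 h2 h3
    have hU0 : w Up Un x = 0 := by
      by_contra h0
      have hwV := hw x h0
      have hwvals : w Up Un x = 1 ∨ w Up Un x = -1 := by
        unfold w at h0 ⊢; split_ifs <;> simp_all
      rcases hwvals with h1 | h1 <;> rcases sg_vals p.1 x with h2 | h2 <;>
        rw [h1, h2] at hU <;> rw [hsgFG, h2] at hV <;> rw [h1] at hwV <;>
          rw [hwV] at hV <;> omega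
    rcases lemB D hF hG hmaxU hx hU0 with ⟨F', h1, h2, h3⟩ | ⟨y, hy, hy1⟩
    · exact contraU F' h1 h2 h3
    · have hyU : w Up Un y ≠ 0 := by intro h0; rw [h0] at hy1; simp at hy1
      have hwV := hw y hyU
      have hsgy : sg p.2 y = - sg p.1 y := by
        rcases Finset.mem_symmDiff.mp hy with ⟨h1', h2'⟩ | ⟨h1', h2'⟩ <;> simp [sg, h1', h2']
      have hyV : w Vp Vn y * sg p.2 y = -1 := by rw [hwV, hsgy, mul_neg, hy1]
      obtain ⟨G', h1, h2, h3⟩ := lemA D hG hF hmaxV (by rwa [symmDiff_comm]) hyV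
      exact contraV G' h1 h2 h3

lemma w_mod (Sp Sn Tp Tn : Finset (Fin n)) (hdS : Disjoint Sp Sn) (hdT : Disjoint Tp Tn)
    (e : Fin n) :
    w Sp Sn e + w Tp Tn e
      = w (Sp ∩ Tp) (Sn ∩ Tn) e + w ((Sp ∪ Tp) \ (Sn ∪ Tn)) ((Sn ∪ Tn) \ (Sp ∪ Tp)) e := by
  have h1 : e ∈ Sp → e ∉ Sn := fun a b => Finset.disjoint_left.mp hdS a b
  have h2 : e ∈ Tp → e ∉ Tn := fun a b => Finset.disjoint_left.mp hdT a b
  simp only [w, Finset.mem_inter, Finset.mem_union, Finset.mem_sdiff]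
  by_cases hsp : e ∈ Sp <;> by_cases hsn : e ∈ Sn <;> by_cases htp : e ∈ Tp <;>
    by_cases htn : e ∈ Tn <;> simp_all

lemma fz_mod (F Sp Sn Tp Tn : Finset (Fin n)) (hdS : Disjoint Sp Sn) (hdT : Disjoint Tp Tn) :
    fz F Sp Sn + fz F Tp Tn
      = fz F (Sp ∩ Tp) (Sn ∩ Tn) + fz F ((Sp ∪ Tp) \ (Sn ∪ Tn)) ((Sn ∪ Tn) \ (Sp ∪ Tp)) := by
  unfold fz
  rw [← Finset.sum_add_distrib, ← Finset.sum_add_distrib]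
  refine Finset.sum_congr rfl fun e _ => ?_
  have := w_mod Sp Sn Tp Tn hdS hdT e
  linear_combination sg F e * this

lemma card_mod (Sp Sn Tp Tn : Finset (Fin n)) (hdS : Disjoint Sp Sn)
    (hdT : Disjoint Tp Tn) :
    (Sp.card : ℤ) + Sn.card + Tp.card + Tn.card
      = ((Sp ∩ Tp).card : ℤ) + ((Sn ∩ Tn).card : ℤ) + (((Sp ∪ Tp) \ (Sn ∪ Tn)).card : ℤ)
        + (((Sn ∪ Tn) \ (Sp ∪ Tp)).card : ℤ) + 2 * ((Sp ∩ Tn).card : ℤ)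
        + 2 * ((Sn ∩ Tp).card : ℤ) := by
  simp only [cardz, Finset.mul_sum, ← Finset.sum_add_distrib]
  refine Finset.sum_congr rfl fun e _ => ?_
  have h1 : e ∈ Sp → e ∉ Sn := fun a b => Finset.disjoint_left.mp hdS a b
  have h2 : e ∈ Tp → e ∉ Tn := fun a b => Finset.disjoint_left.mp hdT a b
  simp only [Finset.mem_inter, Finset.mem_union, Finset.mem_sdiff]
  by_cases hsp : e ∈ Sp <;> by_cases hsn : e ∈ Sn <;> by_cases htp : e ∈ Tp <;>
    by_cases htn : e ∈ Tn <;> simp_all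

lemma g_eq_sup' (D : DeltaMatroid n) {Sp Sn : Finset (Fin n)} (hd : Disjoint Sp Sn) :
    D.g Sp Sn = D.feas.sup' D.nonempty (fun F => fz F Sp Sn) := by
  show gFam D.feas Sp Sn = _
  rw [gFam, dif_pos D.nonempty]
  exact Finset.sup'_congr D.nonempty rfl (fun F _ => fz_eq F Sp Sn hd)

lemma fz_le_g (D : DeltaMatroid n) {Sp Sn F : Finset (Fin n)} (hd : Disjoint Sp Sn)
    (hF : F ∈ D.feas) : fz F Sp Sn ≤ D.g Sp Sn := by
  rw [g_eq_sup' D hd]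
  exact Finset.le_sup' (fun F => fz F Sp Sn) hF

lemma forward_empty (D : DeltaMatroid n) : D.g ∅ ∅ = 0 := by
  rw [g_eq_sup' D (show Disjoint (∅ : Finset (Fin n)) ∅ by simp)]
  have : ∀ F ∈ D.feas, fz F (∅ : Finset (Fin n)) ∅ = 0 := by
    intro F _
    simp [fz, w]
  rw [Finset.sup'_congr D.nonempty rfl this, Finset.sup'_const]

lemma forward_single (D : DeltaMatroid n) {Sp Sn : Finset (Fin n)} (hd : Disjoint Sp Sn)
    (hc : Sp.card + Sn.card = 1) : D.g Sp Sn = 1 ∨ D.g Sp Sn = -1 := by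
  rw [g_eq_sup' D hd]
  obtain ⟨F, hF, hFe⟩ := Finset.exists_mem_eq_sup' D.nonempty (fun F => fz F Sp Sn)
  rw [hFe, ← fz_eq F Sp Sn hd]
  have e1 : (Sp ∩ F).card + (Sp \ F).card = Sp.card := Finset.card_inter_add_card_sdiff Sp F
  have e2 : (Sn ∩ F).card + (Sn \ F).card = Sn.card := Finset.card_inter_add_card_sdiff Sn F
  omega

lemma forward_bisub (D : DeltaMatroid n) {Sp Sn Tp Tn : Finset (Fin n)}
    (hdS : Disjoint Sp Sn) (hdT : Disjoint Tp Tn) :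
    D.g (Sp ∩ Tp) (Sn ∩ Tn) + D.g ((Sp ∪ Tp) \ (Sn ∪ Tn)) ((Sn ∪ Tn) \ (Sp ∪ Tp))
      ≤ D.g Sp Sn + D.g Tp Tn := by
  have hdU : Disjoint (Sp ∩ Tp) (Sn ∩ Tn) :=
    Finset.disjoint_left.mpr fun a ha hb =>
      Finset.disjoint_left.mp hdS (Finset.mem_inter.mp ha).1 (Finset.mem_inter.mp hb).1
  have hdV : Disjoint ((Sp ∪ Tp) \ (Sn ∪ Tn)) ((Sn ∪ Tn) \ (Sp ∪ Tp)) :=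
    disjoint_sdiff_sdiff
  have hp : Sp ∩ Tp ⊆ (Sp ∪ Tp) \ (Sn ∪ Tn) := by
    intro e he
    rw [Finset.mem_inter] at he
    rw [Finset.mem_sdiff, Finset.mem_union, Finset.mem_union]
    exact ⟨Or.inl he.1, fun hh => hh.elim (Finset.disjoint_left.mp hdS he.1)
      (Finset.disjoint_left.mp hdT he.2)⟩
  have hn : Sn ∩ Tn ⊆ (Sn ∪ Tn) \ (Sp ∪ Tp) := by
    intro e he
    rw [Finset.mem_inter] at he
    rw [Finset.mem_sdiff, Finset.mem_union, Finset.mem_union]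
    exact ⟨Or.inl he.1, fun hh => hh.elim
      (fun h' => Finset.disjoint_left.mp hdS h' he.1)
      (fun h' => Finset.disjoint_left.mp hdT h' he.2)⟩
  obtain ⟨F, hF, hmaxU, hmaxV⟩ := common_max D hdV hp hn
  have gU : D.g (Sp ∩ Tp) (Sn ∩ Tn) = fz F (Sp ∩ Tp) (Sn ∩ Tn) := by
    refine le_antisymm ?_ (fz_le_g D hdU hF)
    rw [g_eq_sup' D hdU]
    exact Finset.sup'_le _ _ hmaxU
  have gV : D.g ((Sp ∪ Tp) \ (Sn ∪ Tn)) ((Sn ∪ Tn) \ (Sp ∪ Tp))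
      = fz F ((Sp ∪ Tp) \ (Sn ∪ Tn)) ((Sn ∪ Tn) \ (Sp ∪ Tp)) := by
    refine le_antisymm ?_ (fz_le_g D hdV hF)
    rw [g_eq_sup' D hdV]
    exact Finset.sup'_le _ _ hmaxV
  have hmod := fz_mod F Sp Sn Tp Tn hdS hdT
  have h1 := fz_le_g D hdS hF
  have h2 := fz_le_g D hdT hF
  omega

/-- The axioms on `h`. -/
structure Good (n : ℕ) (h : Finset (Fin n) → Finset (Fin n) → ℤ) : Prop where
  zero : h ∅ ∅ = 0
  single : ∀ Sp Sn : Finset (Fin n), Disjoint Sp Sn → Sp.card + Sn.card = 1 →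
    h Sp Sn = 0 ∨ h Sp Sn = 1
  bisub : ∀ Sp Sn Tp Tn : Finset (Fin n), Disjoint Sp Sn → Disjoint Tp Tn →
    2 * h (Sp ∩ Tp) (Sn ∩ Tn) + 2 * h ((Sp ∪ Tp) \ (Sn ∪ Tn)) ((Sn ∪ Tn) \ (Sp ∪ Tp))
      + ((Sp ∩ Tn).card : ℤ) + ((Sn ∩ Tp).card : ℤ) ≤ 2 * h Sp Sn + 2 * h Tp Tn

variable {h : Finset (Fin n) → Finset (Fin n) → ℤ}

lemma Good.swap (G : Good n h) : Good n (fun a b => h b a) where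
  zero := G.zero
  single := fun Sp Sn hd hc => G.single Sn Sp hd.symm (by omega)
  bisub := by
    intro Sp Sn Tp Tn hdS hdT
    have := G.bisub Sn Sp Tn Tp hdS.symm hdT.symm
    omega

lemma single_bounds (G : Good n h) {x : Fin n} :
    (h {x} ∅ = 0 ∨ h {x} ∅ = 1) ∧ (h ∅ {x} = 0 ∨ h ∅ {x} = 1) :=
  ⟨G.single {x} ∅ (by simp) (by simp), G.single ∅ {x} (by simp) (by simp)⟩

lemma unit_up_p (G : Good n h) {Sp Sn : Finset (Fin n)} {x : Fin n} (hd : Disjoint Sp Sn)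
    (hxp : x ∉ Sp) (hxn : x ∉ Sn) : h (insert x Sp) Sn ≤ h Sp Sn + 1 := by
  have H := G.bisub Sp Sn {x} ∅ hd (by simp)
  have e1 : Sp ∩ {x} = ∅ := by
    ext e; simp only [Finset.mem_inter, Finset.mem_singleton, Finset.notMem_empty, iff_false]
    rintro ⟨h1, rfl⟩; exact hxp h1
  have e2 : (Sp ∪ {x}) \ (Sn ∪ ∅) = insert x Sp := by
    ext e
    simp only [Finset.mem_sdiff, Finset.mem_union, Finset.mem_singleton, Finset.notMem_empty,
      or_false, Finset.mem_insert]
    constructor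
    · rintro ⟨h1 | h1, h2⟩
      · exact Or.inr h1
      · exact Or.inl h1
    · rintro (rfl | h1)
      · exact ⟨Or.inr rfl, hxn⟩
      · exact ⟨Or.inl h1, fun hh => Finset.disjoint_left.mp hd h1 hh⟩
  have e3 : (Sn ∪ ∅) \ (Sp ∪ {x}) = Sn := by
    ext e
    simp only [Finset.mem_sdiff, Finset.mem_union, Finset.mem_singleton, Finset.notMem_empty,
      or_false]
    constructor
    · rintro ⟨h1, _⟩; exact h1
    · intro h1
      refine ⟨h1, fun hh => ?_⟩
      rcases hh with h2 | rfl
      · exact Finset.disjoint_left.mp hd h2 h1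
      · exact hxn h1
  have e4 : Sn ∩ {x} = ∅ := by
    ext e; simp only [Finset.mem_inter, Finset.mem_singleton, Finset.notMem_empty, iff_false]
    rintro ⟨h1, rfl⟩; exact hxn h1
  rw [e1, e2, e3, e4, Finset.inter_empty, Finset.inter_empty] at H
  simp only [Finset.card_empty, Nat.cast_zero, G.zero] at H
  have := (single_bounds G (x := x)).1
  omega

lemma unit_up_n (G : Good n h) {Sp Sn : Finset (Fin n)} {x : Fin n} (hd : Disjoint Sp Sn)
    (hxp : x ∉ Sp) (hxn : x ∉ Sn) : h Sp (insert x Sn) ≤ h Sp Sn + 1 :=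
  unit_up_p G.swap hd.symm hxn hxp

lemma mono_p (G : Good n h) {Sp Sn : Finset (Fin n)} {x : Fin n} (hd : Disjoint Sp Sn)
    (hxp : x ∉ Sp) (hxn : x ∉ Sn) : h Sp Sn ≤ h (insert x Sp) Sn := by
  have hd1 : Disjoint (insert x Sp) Sn := by
    rw [Finset.insert_eq]
    exact Finset.disjoint_union_left.mpr ⟨by simpa using hxn, hd⟩
  have hd2 : Disjoint Sp (insert x Sn) := by
    rw [Finset.insert_eq]
    exact Finset.disjoint_union_right.mpr ⟨by simpa using hxp, hd⟩
  have H := G.bisub (insert x Sp) Sn Sp (insert x Sn) hd1 hd2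
  have e1 : insert x Sp ∩ Sp = Sp := by
    apply Finset.inter_eq_right.mpr; exact Finset.subset_insert x Sp
  have e2 : Sn ∩ insert x Sn = Sn := by
    apply Finset.inter_eq_left.mpr; exact Finset.subset_insert x Sn
  have e3 : (insert x Sp ∪ Sp) \ (Sn ∪ insert x Sn) = Sp := by
    ext e
    simp only [Finset.mem_sdiff, Finset.mem_union, Finset.mem_insert]
    constructor
    · rintro ⟨(⟨rfl | h1⟩ | h1), h2⟩
      · exact absurd (Or.inr (Or.inl rfl)) h2
      · exact h1
      · exact h1
    · intro h1
      refine ⟨Or.inr h1, fun hh => ?_⟩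
      rcases hh with h2 | rfl | h2
      · exact Finset.disjoint_left.mp hd h1 h2
      · exact hxp h1
      · exact Finset.disjoint_left.mp hd h1 h2
  have e4 : (Sn ∪ insert x Sn) \ (insert x Sp ∪ Sp) = Sn := by
    ext e
    simp only [Finset.mem_sdiff, Finset.mem_union, Finset.mem_insert]
    constructor
    · rintro ⟨(h1 | rfl | h1), h2⟩ <;> first | exact h1 | exact absurd (Or.inl (Or.inl rfl)) h2
    · intro h1
      refine ⟨Or.inl h1, fun hh => ?_⟩
      rcases hh with (rfl | h2) | h2
      · exact hxn h1
      · exact Finset.disjoint_right.mp hd h1 h2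
      · exact Finset.disjoint_right.mp hd h1 h2
  have e5 : insert x Sp ∩ insert x Sn = {x} := by
    ext y
    simp only [Finset.mem_inter, Finset.mem_insert, Finset.mem_singleton]
    constructor
    · rintro ⟨h1 | h1, h2 | h2⟩
      · exact h1
      · exact h1
      · exact h2
      · exact absurd h2 (Finset.disjoint_left.mp hd h1)
    · rintro rfl
      exact ⟨Or.inl rfl, Or.inl rfl⟩
  have e6 : Sn ∩ Sp = ∅ := by
    rw [Finset.inter_comm]
    exact Finset.disjoint_iff_inter_eq_empty.mp hd
  rw [e1, e2, e3, e4, e5, e6] at H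
  simp only [Finset.card_singleton, Finset.card_empty, Nat.cast_one, Nat.cast_zero] at H
  have hu := unit_up_n G hd hxp hxn
  omega

lemma mono_n (G : Good n h) {Sp Sn : Finset (Fin n)} {x : Fin n} (hd : Disjoint Sp Sn)
    (hxp : x ∉ Sp) (hxn : x ∉ Sn) : h Sp Sn ≤ h Sp (insert x Sn) :=
  mono_p G.swap hd.symm hxn hxp

lemma raise (G : Good n h) {Sp Sn : Finset (Fin n)} {x : Fin n} (hd : Disjoint Sp Sn)
    (hxp : x ∉ Sp) (hxn : x ∉ Sn) :
    h (insert x Sp) Sn = h Sp Sn + 1 ∨ h Sp (insert x Sn) = h Sp Sn + 1 := by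
  have hd1 : Disjoint (insert x Sp) Sn := by
    rw [Finset.insert_eq]
    exact Finset.disjoint_union_left.mpr ⟨by simpa using hxn, hd⟩
  have hd2 : Disjoint Sp (insert x Sn) := by
    rw [Finset.insert_eq]
    exact Finset.disjoint_union_right.mpr ⟨by simpa using hxp, hd⟩
  have H := G.bisub (insert x Sp) Sn Sp (insert x Sn) hd1 hd2
  have e1 : insert x Sp ∩ Sp = Sp := Finset.inter_eq_right.mpr (Finset.subset_insert x Sp)
  have e2 : Sn ∩ insert x Sn = Sn := Finset.inter_eq_left.mpr (Finset.subset_insert x Sn)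
  have e3 : (insert x Sp ∪ Sp) \ (Sn ∪ insert x Sn) = Sp := by
    ext e
    simp only [Finset.mem_sdiff, Finset.mem_union, Finset.mem_insert]
    constructor
    · rintro ⟨(⟨rfl | h1⟩ | h1), h2⟩
      · exact absurd (Or.inr (Or.inl rfl)) h2
      · exact h1
      · exact h1
    · intro h1
      refine ⟨Or.inr h1, fun hh => ?_⟩
      rcases hh with h2 | rfl | h2
      · exact Finset.disjoint_left.mp hd h1 h2
      · exact hxp h1
      · exact Finset.disjoint_left.mp hd h1 h2
  have e4 : (Sn ∪ insert x Sn) \ (insert x Sp ∪ Sp) = Sn := by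
    ext e
    simp only [Finset.mem_sdiff, Finset.mem_union, Finset.mem_insert]
    constructor
    · rintro ⟨(h1 | rfl | h1), h2⟩ <;> first | exact h1 | exact absurd (Or.inl (Or.inl rfl)) h2
    · intro h1
      refine ⟨Or.inl h1, fun hh => ?_⟩
      rcases hh with (rfl | h2) | h2
      · exact hxn h1
      · exact Finset.disjoint_right.mp hd h1 h2
      · exact Finset.disjoint_right.mp hd h1 h2
  have e5 : insert x Sp ∩ insert x Sn = {x} := by
    ext y
    simp only [Finset.mem_inter, Finset.mem_insert, Finset.mem_singleton]
    constructor
    · rintro ⟨h1 | h1, h2 | h2⟩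
      · exact h1
      · exact h1
      · exact h2
      · exact absurd h2 (Finset.disjoint_left.mp hd h1)
    · rintro rfl
      exact ⟨Or.inl rfl, Or.inl rfl⟩
  have e6 : Sn ∩ Sp = ∅ := by
    rw [Finset.inter_comm]
    exact Finset.disjoint_iff_inter_eq_empty.mp hd
  rw [e1, e2, e3, e4, e5, e6] at H
  simp only [Finset.card_singleton, Finset.card_empty, Nat.cast_one, Nat.cast_zero] at H
  have hu1 := unit_up_p G hd hxp hxn
  have hu2 := unit_up_n G hd hxp hxn
  omega

lemma steps_p (G : Good n h) (B : Finset (Fin n)) :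
    ∀ Sp Sn : Finset (Fin n), Disjoint (Sp ∪ B) Sn → Disjoint Sp B →
      h Sp Sn ≤ h (Sp ∪ B) Sn ∧ h (Sp ∪ B) Sn ≤ h Sp Sn + B.card := by
  induction B using Finset.induction_on with
  | empty => intro Sp Sn _ _; simp
  | insert _ _ hx ih =>
    rename_i a B
    intro Sp Sn hd1 hd2
    have hxSp : a ∉ Sp := fun hh => Finset.disjoint_left.mp hd2 hh (Finset.mem_insert_self a B)
    have hdSpB : Disjoint Sp B := Finset.disjoint_left.mpr
      (fun e he hb => Finset.disjoint_left.mp hd2 he (Finset.mem_insert_of_mem hb))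
    have hd1' : Disjoint (Sp ∪ B) Sn := Finset.disjoint_left.mpr
      (fun e he => Finset.disjoint_left.mp hd1 (by
        rcases Finset.mem_union.mp he with h1 | h1
        · exact Finset.mem_union_left _ h1
        · exact Finset.mem_union_right _ (Finset.mem_insert_of_mem h1)))
    obtain ⟨ih1, ih2⟩ := ih Sp Sn hd1' hdSpB
    have key : Sp ∪ insert a B = insert a (Sp ∪ B) := by
      ext y; simp only [Finset.mem_union, Finset.mem_insert]; tauto
    have haSB : a ∉ Sp ∪ B := by
      simp only [Finset.mem_union]
      push_neg
      exact ⟨hxSp, hx⟩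
    have haSn : a ∉ Sn := fun hh => Finset.disjoint_left.mp hd1
      (Finset.mem_union_right _ (Finset.mem_insert_self a B)) hh
    have hmono := mono_p G hd1' haSB haSn
    have hunit := unit_up_p G hd1' haSB haSn
    rw [key]
    constructor
    · omega
    · rw [Finset.card_insert_of_notMem hx]
      push_cast
      omega

lemma steps_n (G : Good n h) (B : Finset (Fin n)) {Sp Sn : Finset (Fin n)}
    (hd1 : Disjoint Sp (Sn ∪ B)) (hd2 : Disjoint Sn B) :
    h Sp Sn ≤ h Sp (Sn ∪ B) ∧ h Sp (Sn ∪ B) ≤ h Sp Sn + B.card :=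
  steps_p G.swap B Sn Sp hd1.symm hd2

/-- Monotonicity and Lipschitz bounds for nested admissible pairs. -/
lemma mono_both (G : Good n h) {Sp' Sn' Sp Sn : Finset (Fin n)}
    (hp : Sp' ⊆ Sp) (hn : Sn' ⊆ Sn) (hd : Disjoint Sp Sn) :
    h Sp' Sn' ≤ h Sp Sn ∧
      h Sp Sn ≤ h Sp' Sn' + ((Sp.card : ℤ) - Sp'.card) + ((Sn.card : ℤ) - Sn'.card) := by
  have hd1 : Disjoint Sp Sn' := hd.mono_right hn
  have hdm : Disjoint Sp' Sn' := hd1.mono_left hp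
  have e1 : Sp' ∪ (Sp \ Sp') = Sp := Finset.union_sdiff_of_subset hp
  have e2 : Sn' ∪ (Sn \ Sn') = Sn := Finset.union_sdiff_of_subset hn
  have s1 := steps_p G (Sp \ Sp') Sp' Sn' (by rw [e1]; exact hd1) (Finset.disjoint_sdiff)
  rw [e1] at s1
  have s2 := steps_n G (Sn \ Sn') (Sp := Sp) (Sn := Sn') (by rw [e2]; exact hd)
    (Finset.disjoint_sdiff)
  rw [e2] at s2
  have c1 : ((Sp \ Sp').card : ℤ) = (Sp.card : ℤ) - Sp'.card := by
    rw [Finset.card_sdiff_of_subset hp]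
    have := Finset.card_le_card hp
    push_cast
    omega
  have c2 : ((Sn \ Sn').card : ℤ) = (Sn.card : ℤ) - Sn'.card := by
    rw [Finset.card_sdiff_of_subset hn]
    have := Finset.card_le_card hn
    push_cast
    omega
  rw [c1] at s1
  rw [c2] at s2
  exact ⟨le_trans s1.1 s2.1, by omega⟩

lemma h_nonneg (G : Good n h) {Sp Sn : Finset (Fin n)} (hd : Disjoint Sp Sn) :
    0 ≤ h Sp Sn := by
  have := (mono_both G (Finset.empty_subset Sp) (Finset.empty_subset Sn) hd).1
  rw [G.zero] at this
  exact this

lemma h_le_card (G : Good n h) {Sp Sn : Finset (Fin n)} (hd : Disjoint Sp Sn) :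
    h Sp Sn ≤ (Sp.card : ℤ) + Sn.card := by
  have := (mono_both G (Finset.empty_subset Sp) (Finset.empty_subset Sn) hd).2
  rw [G.zero] at this
  simpa using this

/-- Full-rank subpairs of full-rank pairs are full-rank. -/
lemma fullrank_down (G : Good n h) {Sp' Sn' Sp Sn : Finset (Fin n)}
    (hp : Sp' ⊆ Sp) (hn : Sn' ⊆ Sn) (hd : Disjoint Sp Sn)
    (hfull : h Sp Sn = (Sp.card : ℤ) + Sn.card) :
    h Sp' Sn' = (Sp'.card : ℤ) + Sn'.card := by
  have h1 := (mono_both G hp hn hd).2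
  have h2 := h_le_card G (hd.mono hp hn)
  omega

/-- Persistence of drops (p-side). -/
lemma persist_p (G : Good n h) {Sp Sn Tp Tn : Finset (Fin n)} {x : Fin n}
    (hdT : Disjoint Tp Tn) (hsp : Sp ⊆ Tp) (hsn : Sn ⊆ Tn) (hxp : x ∉ Tp) (hxn : x ∉ Tn)
    (hdrop : h (insert x Sp) Sn = h Sp Sn) :
    h (insert x Tp) Tn = h Tp Tn := by
  have hdS : Disjoint Sp Sn := hdT.mono hsp hsn
  have hxSp : x ∉ Sp := fun hh => hxp (hsp hh)
  have hxSn : x ∉ Sn := fun hh => hxn (hsn hh)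
  have hd1 : Disjoint (insert x Sp) Sn := by
    rw [Finset.insert_eq]
    exact Finset.disjoint_union_left.mpr ⟨by simpa using hxSn, hdS⟩
  have H := G.bisub (insert x Sp) Sn Tp Tn hd1 hdT
  have mem1 : ∀ y, y ∈ Sp → y ∈ Tp := fun y hy => hsp hy
  have mem2 : ∀ y, y ∈ Sn → y ∈ Tn := fun y hy => hsn hy
  have e1 : insert x Sp ∩ Tp = Sp := by
    ext y
    have d1 := fun (hy : y ∈ Tp) (hy2 : y ∈ Tn) => Finset.disjoint_left.mp hdT hy hy2
    simp only [Finset.mem_inter, Finset.mem_insert]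
    constructor
    · rintro ⟨rfl | h1, h2⟩
      · exact absurd h2 hxp
      · exact h1
    · intro h1; exact ⟨Or.inr h1, hsp h1⟩
  have e2 : Sn ∩ Tn = Sn := Finset.inter_eq_left.mpr hsn
  have e3 : (insert x Sp ∪ Tp) \ (Sn ∪ Tn) = insert x Tp := by
    ext y
    have d1 := fun (hy : y ∈ Tp) (hy2 : y ∈ Tn) => Finset.disjoint_left.mp hdT hy hy2
    simp only [Finset.mem_sdiff, Finset.mem_union, Finset.mem_insert]
    constructor
    · rintro ⟨(rfl | h1) | h1, h2⟩
      · exact Or.inl rfl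
      · exact Or.inr (hsp h1)
      · exact Or.inr h1
    · rintro (rfl | h1)
      · exact ⟨Or.inl (Or.inl rfl), fun hh => hh.elim (fun h2 => hxn (hsn h2)) hxn⟩
      · exact ⟨Or.inr h1, fun hh => hh.elim (fun h2 => d1 h1 (hsn h2)) (d1 h1)⟩
  have e4 : (Sn ∪ Tn) \ (insert x Sp ∪ Tp) = Tn := by
    ext y
    have d1 := fun (hy : y ∈ Tp) (hy2 : y ∈ Tn) => Finset.disjoint_left.mp hdT hy hy2
    simp only [Finset.mem_sdiff, Finset.mem_union, Finset.mem_insert]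
    constructor
    · rintro ⟨h1 | h1, _⟩
      · exact hsn h1
      · exact h1
    · intro h1
      refine ⟨Or.inr h1, fun hh => ?_⟩
      rcases hh with (rfl | h2) | h2
      · exact hxn h1
      · exact d1 (hsp h2) h1
      · exact d1 h2 h1
  have e5 : insert x Sp ∩ Tn = ∅ := by
    ext y
    simp only [Finset.mem_inter, Finset.mem_insert, Finset.notMem_empty, iff_false]
    rintro ⟨rfl | h1, h2⟩
    · exact hxn h2
    · exact Finset.disjoint_left.mp hdT (hsp h1) h2
  have e6 : Sn ∩ Tp = ∅ := by
    ext y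
    simp only [Finset.mem_inter, Finset.notMem_empty, iff_false]
    rintro ⟨h1, h2⟩
    exact Finset.disjoint_left.mp hdT h2 (hsn h1)
  rw [e1, e2, e3, e4, e5, e6, hdrop] at H
  simp only [Finset.card_empty, Nat.cast_zero] at H
  have hxTpTn : x ∉ Tp := hxp
  have hmono := mono_p G hdT hxp hxn
  omega

lemma persist_n (G : Good n h) {Sp Sn Tp Tn : Finset (Fin n)} {x : Fin n}
    (hdT : Disjoint Tp Tn) (hsp : Sp ⊆ Tp) (hsn : Sn ⊆ Tn) (hxp : x ∉ Tp) (hxn : x ∉ Tn)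
    (hdrop : h Sp (insert x Sn) = h Sp Sn) :
    h Tp (insert x Tn) = h Tp Tn :=
  persist_p G.swap hdT.symm hsn hsp hxn hxp hdrop

/-- Absorbing a set of dropping elements (p-side). -/
lemma absorb_p (G : Good n h) (A : Finset (Fin n)) :
    ∀ Pp Pn : Finset (Fin n), Disjoint (Pp ∪ A) Pn → Disjoint Pp A →
      (∀ w ∈ A, h (insert w Pp) Pn = h Pp Pn) → h (Pp ∪ A) Pn = h Pp Pn := by
  induction A using Finset.induction_on with
  | empty => intro Pp Pn _ _ _; simp
  | insert _ _ hx ih =>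
    rename_i a A
    intro Pp Pn hd1 hd2 hdrops
    have haPp : a ∉ Pp := fun hh => Finset.disjoint_left.mp hd2 hh (Finset.mem_insert_self a A)
    have haPn : a ∉ Pn := fun hh => Finset.disjoint_left.mp hd1
      (Finset.mem_union_right _ (Finset.mem_insert_self a A)) hh
    have hdPA : Disjoint Pp A := Finset.disjoint_left.mpr
      (fun e he hb => Finset.disjoint_left.mp hd2 he (Finset.mem_insert_of_mem hb))
    have hd1' : Disjoint (Pp ∪ A) Pn := Finset.disjoint_left.mpr fun e he =>
      Finset.disjoint_left.mp hd1 (by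
        rcases Finset.mem_union.mp he with h1 | h1
        · exact Finset.mem_union_left _ h1
        · exact Finset.mem_union_right _ (Finset.mem_insert_of_mem h1))
    have ih' := ih Pp Pn hd1' hdPA (fun w hw => hdrops w (Finset.mem_insert_of_mem hw))
    have key : Pp ∪ insert a A = insert a (Pp ∪ A) := by
      ext y; simp only [Finset.mem_union, Finset.mem_insert]; tauto
    have haPA : a ∉ Pp ∪ A := by simp only [Finset.mem_union]; push_neg; exact ⟨haPp, hx⟩
    rw [key]
    have := persist_p G hd1' Finset.subset_union_left
      (Finset.Subset.refl Pn) haPA haPn (hdrops a (Finset.mem_insert_self a A))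
    rw [this, ih']

lemma absorb_n (G : Good n h) (A : Finset (Fin n)) {Pp Pn : Finset (Fin n)}
    (hd1 : Disjoint Pp (Pn ∪ A)) (hd2 : Disjoint Pn A)
    (hdrops : ∀ w ∈ A, h Pp (insert w Pn) = h Pp Pn) : h Pp (Pn ∪ A) = h Pp Pn :=
  absorb_p G.swap A Pn Pp hd1.symm hd2 hdrops

/-- Greedy extension to a full admissible pair, raising `h` at each step. -/
lemma extend_full (G : Good n h) :
    ∀ (k : ℕ) (Sp Sn : Finset (Fin n)), Disjoint Sp Sn → ((Finset.univ \ (Sp ∪ Sn)).card = k) →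
      ∃ Tp Tn : Finset (Fin n), Sp ⊆ Tp ∧ Sn ⊆ Tn ∧ Disjoint Tp Tn ∧ Tp ∪ Tn = Finset.univ ∧
        h Tp Tn = h Sp Sn + ((n : ℤ) - Sp.card - Sn.card) := by
  intro k
  induction k with
  | zero =>
    intro Sp Sn hd hcard
    have hfull : Sp ∪ Sn = Finset.univ := by
      have h0 : Finset.univ \ (Sp ∪ Sn) = ∅ := Finset.card_eq_zero.mp hcard
      have h2 : Finset.univ ⊆ Sp ∪ Sn := by
        intro e he
        by_contra hne
        have hmem : e ∈ Finset.univ \ (Sp ∪ Sn) := Finset.mem_sdiff.mpr ⟨he, hne⟩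
        rw [h0] at hmem
        exact absurd hmem (Finset.notMem_empty e)
      exact Finset.eq_univ_iff_forall.mpr fun e => h2 (Finset.mem_univ e)
    have hcards : (Sp.card : ℤ) + Sn.card = n := by
      have := Finset.card_union_of_disjoint hd
      rw [hfull, Finset.card_univ, Fintype.card_fin] at this
      push_cast
      omega
    exact ⟨Sp, Sn, Finset.Subset.refl _, Finset.Subset.refl _, hd, hfull, by omega⟩
  | succ k ih =>
    intro Sp Sn hd hcard
    have hne : (Finset.univ \ (Sp ∪ Sn)).Nonempty := by
      rw [← Finset.card_pos, hcard]; omega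
    obtain ⟨x, hx⟩ := hne
    rw [Finset.mem_sdiff, Finset.mem_union] at hx
    push_neg at hx
    obtain ⟨-, hxp, hxn⟩ := hx
    have hd1 : Disjoint (insert x Sp) Sn := by
      rw [Finset.insert_eq]
      exact Finset.disjoint_union_left.mpr ⟨by simpa using hxn, hd⟩
    have hd2 : Disjoint Sp (insert x Sn) := by
      rw [Finset.insert_eq]
      exact Finset.disjoint_union_right.mpr ⟨by simpa using hxp, hd⟩
    have hc1 : (Finset.univ \ (insert x Sp ∪ Sn)).card = k := by
      have : Finset.univ \ (insert x Sp ∪ Sn) = (Finset.univ \ (Sp ∪ Sn)).erase x := by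
        ext y
        simp only [Finset.mem_sdiff, Finset.mem_union, Finset.mem_insert, Finset.mem_erase,
          Finset.mem_univ, true_and]
        tauto
      rw [this, Finset.card_erase_of_mem, hcard]
      · rfl
      · rw [Finset.mem_sdiff, Finset.mem_union]
        exact ⟨Finset.mem_univ x, fun hh => hh.elim hxp hxn⟩
    have hc2 : (Finset.univ \ (Sp ∪ insert x Sn)).card = k := by
      have : Finset.univ \ (Sp ∪ insert x Sn) = (Finset.univ \ (Sp ∪ Sn)).erase x := by
        ext y
        simp only [Finset.mem_sdiff, Finset.mem_union, Finset.mem_insert, Finset.mem_erase,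
          Finset.mem_univ, true_and]
        tauto
      rw [this, Finset.card_erase_of_mem, hcard]
      · rfl
      · rw [Finset.mem_sdiff, Finset.mem_union]
        exact ⟨Finset.mem_univ x, fun hh => hh.elim hxp hxn⟩
    rcases raise G hd hxp hxn with hr | hr
    · obtain ⟨Tp, Tn, s1, s2, s3, s4, s5⟩ := ih (insert x Sp) Sn hd1 hc1
      refine ⟨Tp, Tn, fun e he => s1 (Finset.mem_insert_of_mem he), s2, s3, s4, ?_⟩
      rw [s5, hr, Finset.card_insert_of_notMem hxp]
      push_cast
      ring
    · obtain ⟨Tp, Tn, s1, s2, s3, s4, s5⟩ := ih Sp (insert x Sn) hd2 hc2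
      refine ⟨Tp, Tn, s1, fun e he => s2 (Finset.mem_insert_of_mem he), s3, s4, ?_⟩
      rw [s5, hr, Finset.card_insert_of_notMem hxn]
      push_cast
      ring

/-- Iterated removal for uniformly dropping full pairs (p-side). -/
lemma removal_p (G : Good n h) {Tp Tn Sn : Finset (Fin n)} (hdT : Disjoint Tp Tn)
    (hSn : Sn ⊆ Tn)
    (hdrop : ∀ x ∈ Tp, h (Tp.erase x) Tn = h Tp Tn - 1) :
    ∀ Ap : Finset (Fin n), Ap ⊆ Tp → h (Tp \ Ap) Sn ≤ h Tp Sn - Ap.card := by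
  intro Ap
  induction Ap using Finset.induction_on with
  | empty => simp
  | insert _ _ hx ih =>
    rename_i a Ap
    intro hsub
    have haTp : a ∈ Tp := hsub (Finset.mem_insert_self a Ap)
    have hApTp : Ap ⊆ Tp := fun e he => hsub (Finset.mem_insert_of_mem he)
    have ih' := ih hApTp
    have hdS : Disjoint (Tp \ Ap) Sn :=
      (hdT.mono Finset.sdiff_subset hSn)
    have hdT' : Disjoint (Tp.erase a) Tn := hdT.mono_left (Finset.erase_subset a Tp)
    have H := G.bisub (Tp \ Ap) Sn (Tp.erase a) Tn hdS hdT'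
    have e1 : (Tp \ Ap) ∩ Tp.erase a = Tp \ insert a Ap := by
      ext y
      simp only [Finset.mem_inter, Finset.mem_sdiff, Finset.mem_erase, Finset.mem_insert]
      tauto
    have e2 : Sn ∩ Tn = Sn := Finset.inter_eq_left.mpr hSn
    have e3 : ((Tp \ Ap) ∪ Tp.erase a) \ (Sn ∪ Tn) = Tp := by
      have u1 : (Tp \ Ap) ∪ Tp.erase a = Tp := by
        ext y
        simp only [Finset.mem_union, Finset.mem_sdiff, Finset.mem_erase]
        constructor
        · rintro (⟨h1, _⟩ | ⟨_, h1⟩) <;> exact h1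
        · intro h1
          by_cases hy : y = a
          · subst hy
            exact Or.inl ⟨h1, hx⟩
          · exact Or.inr ⟨hy, h1⟩
      rw [u1]
      have u2 : Sn ∪ Tn = Tn := Finset.union_eq_right.mpr hSn
      rw [u2]
      exact Finset.sdiff_eq_self_of_disjoint hdT
    have e4 : (Sn ∪ Tn) \ ((Tp \ Ap) ∪ Tp.erase a) = Tn := by
      have u2 : Sn ∪ Tn = Tn := Finset.union_eq_right.mpr hSn
      rw [u2]
      apply Finset.sdiff_eq_self_of_disjoint
      apply Finset.disjoint_union_right.mpr
      exact ⟨hdT.symm.mono_right Finset.sdiff_subset,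
        hdT.symm.mono_right (Finset.erase_subset a Tp)⟩
    have e5 : (Tp \ Ap) ∩ Tn = ∅ := Finset.disjoint_iff_inter_eq_empty.mp
      (hdT.mono_left Finset.sdiff_subset)
    have e6 : Sn ∩ Tp.erase a = ∅ := Finset.disjoint_iff_inter_eq_empty.mp
      (hdT.symm.mono hSn (Finset.erase_subset a Tp))
    rw [e1, e2, e3, e4, e5, e6] at H
    simp only [Finset.card_empty, Nat.cast_zero] at H
    have hdrop' := hdrop a haTp
    rw [Finset.card_insert_of_notMem hx]
    push_cast
    omega

lemma removal_n (G : Good n h) {Tp Tn Sp : Finset (Fin n)} (hdT : Disjoint Tp Tn)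
    (hSp : Sp ⊆ Tp)
    (hdrop : ∀ x ∈ Tn, h Tp (Tn.erase x) = h Tp Tn - 1) :
    ∀ An : Finset (Fin n), An ⊆ Tn → h Sp (Tn \ An) ≤ h Sp Tn - An.card :=
  removal_p (h := fun a b => h b a) G.swap hdT.symm hSp hdrop

/-- For a deficient full pair, some single flip raises `h`. -/
lemma flip_raise (G : Good n h) {Tp Tn : Finset (Fin n)} (hd : Disjoint Tp Tn)
    (hfull : Tp ∪ Tn = Finset.univ) (hlt : h Tp Tn < (n : ℤ)) :
    (∃ x ∈ Tp, h (Tp.erase x) (insert x Tn) = h Tp Tn + 1) ∨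
      (∃ x ∈ Tn, h (insert x Tp) (Tn.erase x) = h Tp Tn + 1) := by
  by_contra hcon
  push_neg at hcon
  obtain ⟨hc1, hc2⟩ := hcon
  have drop1 : ∀ x ∈ Tp, h (Tp.erase x) Tn = h Tp Tn - 1 := by
    intro x hx
    have hxTn : x ∉ Tn := Finset.disjoint_left.mp hd hx
    have hxe : x ∉ Tp.erase x := Finset.notMem_erase x Tp
    have hd' : Disjoint (Tp.erase x) Tn := hd.mono_left (Finset.erase_subset x Tp)
    have hr := raise G hd' hxe hxTn
    rw [Finset.insert_erase hx] at hr
    have hm : h (Tp.erase x) Tn ≤ h Tp Tn := by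
      have := mono_p G hd' hxe hxTn
      rwa [Finset.insert_erase hx] at this
    have hu : h Tp Tn ≤ h (Tp.erase x) Tn + 1 := by
      have := unit_up_p G hd' hxe hxTn
      rwa [Finset.insert_erase hx] at this
    have := hc1 x hx
    omega
  have drop2 : ∀ x ∈ Tn, h Tp (Tn.erase x) = h Tp Tn - 1 := by
    intro x hx
    have hxTp : x ∉ Tp := Finset.disjoint_right.mp hd hx
    have hxe : x ∉ Tn.erase x := Finset.notMem_erase x Tn
    have hd' : Disjoint Tp (Tn.erase x) := hd.mono_right (Finset.erase_subset x Tn)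
    have hr := raise G hd' hxTp hxe
    rw [Finset.insert_erase hx] at hr
    have hm : h Tp (Tn.erase x) ≤ h Tp Tn := by
      have := mono_n G hd' hxTp hxe
      rwa [Finset.insert_erase hx] at this
    have hu : h Tp Tn ≤ h Tp (Tn.erase x) + 1 := by
      have := unit_up_n G hd' hxTp hxe
      rwa [Finset.insert_erase hx] at this
    have := hc2 x hx
    omega
  have r1 := removal_p G hd (Finset.Subset.refl Tn) drop1 Tp (Finset.Subset.refl Tp)
  rw [Finset.sdiff_self] at r1
  have r2 := removal_n G hd (Finset.empty_subset Tp) drop2 Tn (Finset.Subset.refl Tn)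
  rw [Finset.sdiff_self] at r2
  have hcards : (Tp.card : ℤ) + Tn.card = n := by
    have := Finset.card_union_of_disjoint hd
    rw [hfull, Finset.card_univ, Fintype.card_fin] at this
    push_cast
    omega
  have hz := G.zero
  omega

/-- A full pair of deficiency `k` is within flip-distance `k` of a feasible set. -/
lemma near_feasible (G : Good n h) :
    ∀ (k : ℕ) (Tp Tn : Finset (Fin n)), Disjoint Tp Tn → Tp ∪ Tn = Finset.univ →
      h Tp Tn = (n : ℤ) - k →
      ∃ F : Finset (Fin n), h F (Finset.univ \ F) = n ∧ ((Tp ∆ F).card : ℤ) ≤ k := by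
  intro k
  induction k with
  | zero =>
    intro Tp Tn hd hfull hval
    refine ⟨Tp, ?_, by simp⟩
    have : Finset.univ \ Tp = Tn := by
      ext y
      simp only [Finset.mem_sdiff, Finset.mem_univ, true_and]
      constructor
      · intro hy
        rcases Finset.mem_union.mp (hfull ▸ Finset.mem_univ y) with h1 | h1
        · exact absurd h1 hy
        · exact h1
      · intro hy
        exact Finset.disjoint_right.mp hd hy
    rw [this]
    omega
  | succ k ih =>
    intro Tp Tn hd hfull hval
    have hlt : h Tp Tn < (n : ℤ) := by omega
    rcases flip_raise G hd hfull hlt with ⟨x, hx, hr⟩ | ⟨x, hx, hr⟩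
    · have hd' : Disjoint (Tp.erase x) (insert x Tn) := by
        rw [Finset.insert_eq]
        refine Finset.disjoint_union_right.mpr ⟨?_, hd.mono_left (Finset.erase_subset x Tp)⟩
        simp
      have hfull' : Tp.erase x ∪ insert x Tn = Finset.univ := by
        ext y
        simp only [Finset.mem_union, Finset.mem_erase, Finset.mem_insert, Finset.mem_univ,
          iff_true]
        by_cases hy : y = x
        · exact Or.inr (Or.inl hy)
        · rcases Finset.mem_union.mp (hfull ▸ Finset.mem_univ y) with h1 | h1
          · exact Or.inl ⟨hy, h1⟩
          · exact Or.inr (Or.inr h1)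
      obtain ⟨F, hF, hdist⟩ := ih (Tp.erase x) (insert x Tn) hd' hfull' (by push_cast; omega)
      refine ⟨F, hF, ?_⟩
      have hsub : Tp ∆ F ⊆ insert x ((Tp.erase x) ∆ F) := by
        intro y hy
        rw [Finset.mem_symmDiff] at hy
        by_cases hxy : y = x
        · rw [hxy]; exact Finset.mem_insert_self x _
        · apply Finset.mem_insert_of_mem
          rw [Finset.mem_symmDiff]
          rcases hy with ⟨h1, h2⟩ | ⟨h1, h2⟩
          · exact Or.inl ⟨Finset.mem_erase.mpr ⟨hxy, h1⟩, h2⟩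
          · exact Or.inr ⟨h1, fun hh => h2 (Finset.mem_of_mem_erase hh)⟩
      have := Finset.card_le_card hsub
      have := Finset.card_insert_le x ((Tp.erase x) ∆ F)
      push_cast at hdist ⊢
      omega
    · have hd' : Disjoint (insert x Tp) (Tn.erase x) := by
        rw [Finset.insert_eq]
        refine Finset.disjoint_union_left.mpr ⟨?_, hd.mono_right (Finset.erase_subset x Tn)⟩
        simp
      have hfull' : insert x Tp ∪ Tn.erase x = Finset.univ := by
        ext y
        simp only [Finset.mem_union, Finset.mem_erase, Finset.mem_insert, Finset.mem_univ,
          iff_true]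
        by_cases hy : y = x
        · exact Or.inl (Or.inl hy)
        · rcases Finset.mem_union.mp (hfull ▸ Finset.mem_univ y) with h1 | h1
          · exact Or.inl (Or.inr h1)
          · exact Or.inr ⟨hy, h1⟩
      obtain ⟨F, hF, hdist⟩ := ih (insert x Tp) (Tn.erase x) hd' hfull' (by push_cast; omega)
      refine ⟨F, hF, ?_⟩
      have hsub : Tp ∆ F ⊆ insert x ((insert x Tp) ∆ F) := by
        intro y hy
        rw [Finset.mem_symmDiff] at hy
        by_cases hxy : y = x
        · rw [hxy]; exact Finset.mem_insert_self x _
        · apply Finset.mem_insert_of_mem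
          rw [Finset.mem_symmDiff]
          rcases hy with ⟨h1, h2⟩ | ⟨h1, h2⟩
          · exact Or.inl ⟨Finset.mem_insert_of_mem h1, h2⟩
          · exact Or.inr ⟨h1, fun hh => (Finset.mem_insert.mp hh).elim hxy h2⟩
      have := Finset.card_le_card hsub
      have := Finset.card_insert_le x ((insert x Tp) ∆ F)
      push_cast at hdist ⊢
      omega

/-- Exchange, for `x ∈ F₂ \ F₁`. -/
lemma exchange_half (G : Good n h) : ∀ (m : ℕ), ∀ F₁ F₂ : Finset (Fin n),
    (F₁ ∆ F₂).card = m →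
    h F₁ (Finset.univ \ F₁) = (n : ℤ) → h F₂ (Finset.univ \ F₂) = (n : ℤ) →
    ∀ x, x ∈ F₂ → x ∉ F₁ →
    ∃ y ∈ F₁ ∆ F₂, h (F₁ ∆ {x, y}) (Finset.univ \ (F₁ ∆ {x, y})) = (n : ℤ) := by
  intro m
  induction m using Nat.strong_induction_on with
  | _ m ih =>
  intro F₁ F₂ hm h1 h2 x hx2 hx1
  have hxD : x ∈ F₁ ∆ F₂ := Finset.mem_symmDiff.mpr (Or.inr ⟨hx2, hx1⟩)
  by_cases hm2 : m ≤ 2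
  · -- small cases: F₁ ∆ {x,y} = F₂ for a suitable y
    have hcard : (F₁ ∆ F₂).card = 1 ∨ (F₁ ∆ F₂).card = 2 := by
      have : 1 ≤ (F₁ ∆ F₂).card := Finset.card_pos.mpr ⟨x, hxD⟩
      omega
    have : ∃ y ∈ F₁ ∆ F₂, ({x, y} : Finset (Fin n)) = F₁ ∆ F₂ := by
      rcases hcard with hc | hc
      · refine ⟨x, hxD, ?_⟩
        have : F₁ ∆ F₂ = {x} := Finset.eq_singleton_iff_unique_mem.mpr
          ⟨hxD, fun y hy => by
            by_contra hne
            have := Finset.one_lt_card.mpr ⟨y, hy, x, hxD, hne⟩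
            omega⟩
        rw [this]
        simp
      · have he : ((F₁ ∆ F₂).erase x).card = 1 := by
          rw [Finset.card_erase_of_mem hxD, hc]
        obtain ⟨z, hz⟩ := Finset.card_eq_one.mp he
        refine ⟨z, Finset.mem_of_mem_erase (hz ▸ Finset.mem_singleton_self z), ?_⟩
        have : insert x ((F₁ ∆ F₂).erase x) = F₁ ∆ F₂ := Finset.insert_erase hxD
        rw [← this, hz]
    obtain ⟨y, hy, hxy⟩ := this
    refine ⟨y, hy, ?_⟩
    rw [hxy, symmDiff_symmDiff_cancel_left]
    exact h2
  · -- main case : m ≥ 3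
    push_neg at hm2
    set D := F₁ ∆ F₂ with hD
    set Pp := insert x (F₁ ∩ F₂) with hPp
    set Pn := Finset.univ \ (F₁ ∪ F₂) with hPn
    have hdP : Disjoint Pp Pn := by
      rw [Finset.disjoint_left]
      intro a ha hb
      rw [hPn, Finset.mem_sdiff, Finset.mem_union] at hb
      rw [hPp, Finset.mem_insert, Finset.mem_inter] at ha
      rcases ha with rfl | ⟨h1', h2'⟩
      · exact hb.2 (Or.inr hx2)
      · exact hb.2 (Or.inl h1')
    -- P is full-rank since it sits under the full pair of F₂
    have hF2full : h F₂ (Finset.univ \ F₂) = (F₂.card : ℤ) + (Finset.univ \ F₂).card := by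
      rw [h2, Finset.card_sdiff_of_subset (Finset.subset_univ F₂), Finset.card_univ, Fintype.card_fin]
      have hle : F₂.card ≤ n := by simpa using Finset.card_le_univ F₂
      push_cast
      omega
    have hPsubp : Pp ⊆ F₂ := by
      rw [hPp]
      intro a ha
      rcases Finset.mem_insert.mp ha with rfl | ha'
      · exact hx2
      · exact (Finset.mem_inter.mp ha').2
    have hPsubn : Pn ⊆ Finset.univ \ F₂ := by
      rw [hPn]
      intro a ha
      rw [Finset.mem_sdiff, Finset.mem_union] at ha
      rw [Finset.mem_sdiff]
      exact ⟨ha.1, fun hh => ha.2 (Or.inr hh)⟩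
    have hdF2 : Disjoint F₂ (Finset.univ \ F₂) := Finset.disjoint_sdiff
    have hPfull : h Pp Pn = (Pp.card : ℤ) + Pn.card :=
      fullrank_down G hPsubp hPsubn hdF2 hF2full
    -- the two shores to absorb
    set Ap := F₁ \ F₂ with hAp
    set An := (F₂ \ F₁).erase x with hAn
    -- membership basics
    have hApmem : ∀ w ∈ Ap, w ∉ Pp ∧ w ∉ Pn := by
      intro w hw
      rw [hAp, Finset.mem_sdiff] at hw
      constructor
      · rw [hPp]
        intro hh
        rcases Finset.mem_insert.mp hh with rfl | hh'
        · exact hw.2 hx2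
        · exact hw.2 (Finset.mem_inter.mp hh').2
      · rw [hPn]
        intro hh
        exact (Finset.mem_sdiff.mp hh).2 (Finset.mem_union.mpr (Or.inl hw.1))
    have hAnmem : ∀ w ∈ An, w ∉ Pp ∧ w ∉ Pn := by
      intro w hw
      rw [hAn, Finset.mem_erase] at hw
      obtain ⟨hwx, hw'⟩ := hw
      rw [Finset.mem_sdiff] at hw'
      constructor
      · rw [hPp]
        intro hh
        rcases Finset.mem_insert.mp hh with rfl | hh'
        · exact hwx rfl
        · exact hw'.2 (Finset.mem_inter.mp hh').1
      · rw [hPn]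
        intro hh
        exact (Finset.mem_sdiff.mp hh).2 (Finset.mem_union.mpr (Or.inr hw'.1))
    by_cases hcase : (∀ w ∈ Ap, h (insert w Pp) Pn = h Pp Pn) ∧
        (∀ w ∈ An, h Pp (insert w Pn) = h Pp Pn)
    · -- all drops: contradiction with m ≥ 3
      exfalso
      obtain ⟨hdropP, hdropN⟩ := hcase
      have hdApPp : Disjoint Pp Ap := Finset.disjoint_right.mpr fun w hw => (hApmem w hw).1
      have hdPpApPn : Disjoint (Pp ∪ Ap) Pn := Finset.disjoint_left.mpr (by
        intro a ha
        rcases Finset.mem_union.mp ha with ha | ha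
        · exact Finset.disjoint_left.mp hdP ha
        · exact (hApmem a ha).2)
      have habs1 : h (Pp ∪ Ap) Pn = h Pp Pn := absorb_p G Ap Pp Pn hdPpApPn hdApPp hdropP
      -- persist the n-drops to the extended base
      have hdrops2 : ∀ w ∈ An, h (Pp ∪ Ap) (insert w Pn) = h (Pp ∪ Ap) Pn := by
        intro w hw
        refine persist_n G hdPpApPn Finset.subset_union_left (Finset.Subset.refl Pn) ?_ ?_
          (hdropN w hw)
        · intro hh
          rcases Finset.mem_union.mp hh with h' | h'
          · exact (hAnmem w hw).1 h'
          · rw [hAn, Finset.mem_erase, Finset.mem_sdiff] at hw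
            rw [hAp, Finset.mem_sdiff] at h'
            exact hw.2.2 h'.1
        · exact (hAnmem w hw).2
      have hdAnPn : Disjoint Pn An := Finset.disjoint_right.mpr fun w hw => (hAnmem w hw).2
      have hdfinal : Disjoint (Pp ∪ Ap) (Pn ∪ An) := by
        rw [Finset.disjoint_left]
        intro a ha hb
        rcases Finset.mem_union.mp ha with ha' | ha' <;>
          rcases Finset.mem_union.mp hb with hb' | hb'
        · exact Finset.disjoint_left.mp hdP ha' hb'
        · exact (hAnmem a hb').1 ha'
        · exact (hApmem a ha').2 hb'
        · rw [hAp, Finset.mem_sdiff] at ha'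
          rw [hAn, Finset.mem_erase, Finset.mem_sdiff] at hb'
          exact hb'.2.2 ha'.1
      have habs2 : h (Pp ∪ Ap) (Pn ∪ An) = h Pp Pn := by
        rw [absorb_n G An hdfinal hdAnPn hdrops2, habs1]
      -- identify the absorbed pair with the full pair of `insert x F₁`
      have id1 : Pp ∪ Ap = insert x F₁ := by
        ext a
        rw [hPp, hAp]
        simp only [Finset.mem_union, Finset.mem_insert, Finset.mem_inter, Finset.mem_sdiff]
        constructor
        · rintro ((rfl | ⟨ha, _⟩) | ⟨ha, _⟩)
          · exact Or.inl rfl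
          · exact Or.inr ha
          · exact Or.inr ha
        · rintro (rfl | ha)
          · exact Or.inl (Or.inl rfl)
          · by_cases hf2 : a ∈ F₂
            · exact Or.inl (Or.inr ⟨ha, hf2⟩)
            · exact Or.inr ⟨ha, hf2⟩
      have id2 : Pn ∪ An = Finset.univ \ insert x F₁ := by
        ext a
        rw [hPn, hAn]
        simp only [Finset.mem_union, Finset.mem_sdiff, Finset.mem_univ, true_and,
          Finset.mem_erase, Finset.mem_insert]
        constructor
        · rintro (ha | ⟨hax, ha, ha'⟩)
          · push_neg
            exact ⟨fun hh => ha (by rw [hh]; exact Or.inr hx2), fun hh => ha (Or.inl hh)⟩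
          · push_neg
            exact ⟨hax, ha'⟩
        · intro ha
          push_neg at ha
          by_cases hf2 : a ∈ F₂
          · exact Or.inr ⟨ha.1, hf2, ha.2⟩
          · exact Or.inl (fun hh => hh.elim ha.2 hf2)
      -- compute the size of P
      have idc : Finset.univ \ (Pp ∪ Pn) = D.erase x := by
        ext a
        rw [hPp, hPn, hD]
        simp only [Finset.mem_sdiff, Finset.mem_univ, true_and, Finset.mem_union,
          Finset.mem_insert, Finset.mem_inter, Finset.mem_erase, Finset.mem_symmDiff]
        tauto
      have hcardP : (Pp.card : ℤ) + Pn.card = (n : ℤ) - (m - 1) := by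
        have hu : (Pp ∪ Pn).card = Pp.card + Pn.card := Finset.card_union_of_disjoint hdP
        have hs : (Finset.univ \ (Pp ∪ Pn)).card =
            (Finset.univ).card - (Pp ∪ Pn).card := Finset.card_sdiff_of_subset (Finset.subset_univ _)
        rw [idc, Finset.card_erase_of_mem (by rw [hD] at hxD ⊢; exact hxD), hm,
          Finset.card_univ, Fintype.card_fin] at hs
        have hle : (Pp ∪ Pn).card ≤ n := by simpa using Finset.card_le_univ (Pp ∪ Pn)
        push_cast
        omega
      -- lower bound: h of full pair of `insert x F₁` is ≥ n - 1
      have hF1full : h F₁ (Finset.univ \ F₁) = (F₁.card : ℤ) + (Finset.univ \ F₁).card := by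
        rw [h1, Finset.card_sdiff_of_subset (Finset.subset_univ F₁), Finset.card_univ, Fintype.card_fin]
        have hle : F₁.card ≤ n := by simpa using Finset.card_le_univ F₁
        push_cast
        omega
      have hsub1 : Finset.univ \ insert x F₁ ⊆ Finset.univ \ F₁ := by
        intro a ha
        rw [Finset.mem_sdiff] at ha ⊢
        exact ⟨ha.1, fun hh => ha.2 (Finset.mem_insert_of_mem hh)⟩
      have hdF1 : Disjoint F₁ (Finset.univ \ F₁) := Finset.disjoint_sdiff
      have hlow : h F₁ (Finset.univ \ insert x F₁)
          = (F₁.card : ℤ) + (Finset.univ \ insert x F₁).card :=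
        fullrank_down G (Finset.Subset.refl F₁) hsub1 hdF1 hF1full
      have hdins : Disjoint (insert x F₁) (Finset.univ \ insert x F₁) := Finset.disjoint_sdiff
      have hxnotc : x ∉ Finset.univ \ insert x F₁ := by
        rw [Finset.mem_sdiff]
        push_neg
        intro
        exact Finset.mem_insert_self x F₁
      have hmono : h F₁ (Finset.univ \ insert x F₁)
          ≤ h (insert x F₁) (Finset.univ \ insert x F₁) :=
        mono_p G (hdins.mono_left (Finset.subset_insert x F₁)) hx1 hxnotc
      -- cards
      have hc1 : ((Finset.univ \ insert x F₁).card : ℤ) = (n : ℤ) - F₁.card - 1 := by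
        rw [Finset.card_sdiff_of_subset (Finset.subset_univ _), Finset.card_univ, Fintype.card_fin,
          Finset.card_insert_of_notMem hx1]
        have hle : (insert x F₁).card ≤ n := by simpa using Finset.card_le_univ (insert x F₁)
        rw [Finset.card_insert_of_notMem hx1] at hle
        push_cast
        omega
      rw [id1, id2] at habs2
      rw [hPfull, hcardP] at habs2
      rw [hc1] at hlow
      -- habs2 : h (insert x F₁) (univ \ insert x F₁) = n - (m-1); hlow+hmono: ≥ n - 1
      omega
    · -- some non-drop: extend to a feasible set closer to F₁
      push_neg at hcase
      -- extract a raising element w together with the raised pair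
      have hkey : ∃ Rp Rn : Finset (Fin n), ∃ w ∈ D, w ≠ x ∧
          Disjoint Rp Rn ∧ Pp ⊆ Rp ∧ Pn ⊆ Rn ∧ ((w ∈ F₁ ∧ w ∈ Rp) ∨ (w ∉ F₁ ∧ w ∈ Rn)) ∧
          ((Rp.card : ℤ) + Rn.card = (Pp.card : ℤ) + Pn.card + 1) ∧
          h Rp Rn = h Pp Pn + 1 := by
        by_cases hAll : ∀ w ∈ Ap, h (insert w Pp) Pn = h Pp Pn
        · obtain ⟨w, hw, hne⟩ := hcase hAll
          have hmem := hAnmem w hw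
          have hdP' : Disjoint Pp (insert w Pn) := by
            rw [Finset.insert_eq]
            exact Finset.disjoint_union_right.mpr ⟨by simpa using hmem.1, hdP⟩
          have hb1 := mono_n G hdP hmem.1 hmem.2
          have hb2 := unit_up_n G hdP hmem.1 hmem.2
          have hwD : w ∈ D := by
            rw [hAn, Finset.mem_erase, Finset.mem_sdiff] at hw
            rw [hD, Finset.mem_symmDiff]
            exact Or.inr ⟨hw.2.1, hw.2.2⟩
          have hwx : w ≠ x := by
            rw [hAn, Finset.mem_erase] at hw
            exact hw.1
          have hwF1 : w ∉ F₁ := by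
            rw [hAn, Finset.mem_erase, Finset.mem_sdiff] at hw
            exact hw.2.2
          refine ⟨Pp, insert w Pn, w, hwD, hwx, hdP', Finset.Subset.refl Pp,
            Finset.subset_insert w Pn, Or.inr ⟨hwF1, Finset.mem_insert_self w Pn⟩,
            ?_, by omega⟩
          rw [Finset.card_insert_of_notMem hmem.2]
          push_cast
          ring
        · push_neg at hAll
          obtain ⟨w, hw, hne⟩ := hAll
          have hmem := hApmem w hw
          have hdP' : Disjoint (insert w Pp) Pn := by
            rw [Finset.insert_eq]
            exact Finset.disjoint_union_left.mpr ⟨by simpa using hmem.2, hdP⟩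
          have hb1 := mono_p G hdP hmem.1 hmem.2
          have hb2 := unit_up_p G hdP hmem.1 hmem.2
          have hwD : w ∈ D := by
            rw [hAp, Finset.mem_sdiff] at hw
            rw [hD, Finset.mem_symmDiff]
            exact Or.inl ⟨hw.1, hw.2⟩
          have hwx : w ≠ x := by
            rw [hAp, Finset.mem_sdiff] at hw
            rintro rfl
            exact hw.2 hx2
          have hwF1 : w ∈ F₁ := by
            rw [hAp, Finset.mem_sdiff] at hw
            exact hw.1
          refine ⟨insert w Pp, Pn, w, hwD, hwx, hdP', Finset.subset_insert w Pp,
            Finset.Subset.refl Pn, Or.inl ⟨hwF1, Finset.mem_insert_self w Pp⟩,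
            ?_, by omega⟩
          rw [Finset.card_insert_of_notMem hmem.1]
          push_cast
          ring
      obtain ⟨Rp, Rn, w, hwD, hwx, hdR, hRp, hRn, hwR, hRcard, hRval⟩ := hkey
      -- extend R to a full pair of value n
      obtain ⟨Tp, Tn, hTp, hTn, hdT, hTfull, hTval⟩ :=
        extend_full G (Finset.univ \ (Rp ∪ Rn)).card Rp Rn hdR rfl
      have hTn' : Tn = Finset.univ \ Tp := by
        ext a
        rw [Finset.mem_sdiff]
        constructor
        · intro ha
          exact ⟨Finset.mem_univ a, Finset.disjoint_right.mp hdT ha⟩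
        · intro ha
          rcases Finset.mem_union.mp (hTfull ▸ Finset.mem_univ a) with h' | h'
          · exact absurd h' ha.2
          · exact h'
      have hTfeas : h Tp (Finset.univ \ Tp) = (n : ℤ) := by
        rw [← hTn', hTval, hRval, hPfull]
        omega
      -- F₁ ∆ Tp ⊆ D.erase w
      have hinterTp : F₁ ∩ F₂ ⊆ Tp := fun e he =>
        hTp (hRp (by rw [hPp]; exact Finset.mem_insert_of_mem he))
      have houtTn : Finset.univ \ (F₁ ∪ F₂) ⊆ Tn := fun e he => hTn (hRn (by rwa [hPn]))
      have hsubD : F₁ ∆ Tp ⊆ D.erase w := by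
        intro a ha
        rw [Finset.mem_symmDiff] at ha
        have haD : a ∈ D := by
          rw [hD, Finset.mem_symmDiff]
          by_cases hf1 : a ∈ F₁ <;> by_cases hf2 : a ∈ F₂
          · have haTp : a ∈ Tp := hinterTp (Finset.mem_inter.mpr ⟨hf1, hf2⟩)
            rcases ha with ⟨_, hna⟩ | ⟨_, hna⟩
            · exact absurd haTp hna
            · exact absurd hf1 hna
          · exact Or.inl ⟨hf1, hf2⟩
          · exact Or.inr ⟨hf2, hf1⟩
          · have haTn : a ∈ Tn := houtTn (by
              rw [Finset.mem_sdiff, Finset.mem_union]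
              exact ⟨Finset.mem_univ a, fun hh => hh.elim hf1 hf2⟩)
            have hnotTp : a ∉ Tp := Finset.disjoint_right.mp hdT haTn
            rcases ha with ⟨ha1, _⟩ | ⟨ha1, _⟩
            · exact absurd ha1 hf1
            · exact absurd ha1 hnotTp
        rw [Finset.mem_erase]
        refine ⟨?_, haD⟩
        rintro rfl
        rcases hwR with ⟨hwF1, hwRp⟩ | ⟨hwF1, hwRn⟩
        · have hwTp := hTp hwRp
          rcases ha with ⟨_, hna⟩ | ⟨_, hna⟩
          · exact hna hwTp
          · exact hna hwF1
        · have hwTn := hTn hwRn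
          have hwnotTp := Finset.disjoint_right.mp hdT hwTn
          rcases ha with ⟨ha1, _⟩ | ⟨ha1, _⟩
          · exact hwF1 ha1
          · exact hwnotTp ha1
      have hlt : (F₁ ∆ Tp).card < m := by
        have hle := Finset.card_le_card hsubD
        have hcerase : (D.erase w).card = m - 1 := by
          rw [Finset.card_erase_of_mem hwD, hD, hm]
        omega
      have hxTp : x ∈ Tp := hTp (hRp (by rw [hPp]; exact Finset.mem_insert_self x _))
      obtain ⟨y, hy, hval⟩ := ih (F₁ ∆ Tp).card hlt F₁ Tp rfl h1 hTfeas x hxTp hx1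
      exact ⟨y, (Finset.erase_subset w D) (hsubD hy), hval⟩

lemma compl_symmDiff_eq (F X : Finset (Fin n)) :
    (Finset.univ \ F) ∆ X = Finset.univ \ (F ∆ X) := by
  ext a
  simp only [Finset.mem_symmDiff, Finset.mem_sdiff, Finset.mem_univ, true_and]
  tauto

lemma compl_compl_eq (F : Finset (Fin n)) : Finset.univ \ (Finset.univ \ F) = F := by
  ext a
  simp only [Finset.mem_sdiff, Finset.mem_univ, true_and]
  tauto

lemma compl_symmDiff_compl (F₁ F₂ : Finset (Fin n)) :
    (Finset.univ \ F₁) ∆ (Finset.univ \ F₂) = F₁ ∆ F₂ := by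
  ext a
  simp only [Finset.mem_symmDiff, Finset.mem_sdiff, Finset.mem_univ, true_and]
  tauto

/-- Full exchange property for the family of feasible sets of `h`. -/
lemma exchange_full (G : Good n h) (F₁ F₂ : Finset (Fin n))
    (h1 : h F₁ (Finset.univ \ F₁) = (n : ℤ)) (h2 : h F₂ (Finset.univ \ F₂) = (n : ℤ))
    (x : Fin n) (hx : x ∈ F₁ ∆ F₂) :
    ∃ y ∈ F₁ ∆ F₂, h (F₁ ∆ {x, y}) (Finset.univ \ (F₁ ∆ {x, y})) = (n : ℤ) := by
  rcases Finset.mem_symmDiff.mp hx with ⟨hx1, hx2⟩ | ⟨hx2, hx1⟩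
  · -- x ∈ F₁ \ F₂ : use the swapped function on complements
    have h1' : (fun a b => h b a) (Finset.univ \ F₁)
        (Finset.univ \ (Finset.univ \ F₁)) = (n : ℤ) := by
      dsimp only
      rw [compl_compl_eq]
      exact h1
    have h2' : (fun a b => h b a) (Finset.univ \ F₂)
        (Finset.univ \ (Finset.univ \ F₂)) = (n : ℤ) := by
      dsimp only
      rw [compl_compl_eq]
      exact h2
    have hx2' : x ∈ Finset.univ \ F₂ := Finset.mem_sdiff.mpr ⟨Finset.mem_univ x, hx2⟩
    have hx1' : x ∉ Finset.univ \ F₁ := by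
      rw [Finset.mem_sdiff]
      push_neg
      intro
      exact hx1
    obtain ⟨y, hy, hval⟩ := exchange_half (G.swap)
      ((Finset.univ \ F₁) ∆ (Finset.univ \ F₂)).card (Finset.univ \ F₁) (Finset.univ \ F₂)
      rfl h1' h2' x hx2' hx1'
    rw [compl_symmDiff_compl] at hy
    refine ⟨y, hy, ?_⟩
    rw [compl_symmDiff_eq, compl_compl_eq] at hval
    exact hval
  · exact exchange_half G (F₁ ∆ F₂).card F₁ F₂ rfl h1 h2 x hx2 hx1

/-- The feasible sets of `h`. -/
noncomputable def feasOf (h : Finset (Fin n) → Finset (Fin n) → ℤ) : Finset (Finset (Fin n)) :=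
  Finset.univ.filter (fun F => h F (Finset.univ \ F) = (n : ℤ))

lemma mem_feasOf {F : Finset (Fin n)} :
    F ∈ feasOf h ↔ h F (Finset.univ \ F) = (n : ℤ) := by
  rw [feasOf, Finset.mem_filter]
  simp

lemma feasOf_nonempty (G : Good n h) : (feasOf h).Nonempty := by
  obtain ⟨Tp, Tn, _, _, hdT, hTfull, hTval⟩ :=
    extend_full G (Finset.univ \ ((∅ : Finset (Fin n)) ∪ ∅)).card ∅ ∅ (by simp) rfl
  refine ⟨Tp, mem_feasOf.mpr ?_⟩
  have hTn' : Tn = Finset.univ \ Tp := by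
    ext a
    rw [Finset.mem_sdiff]
    constructor
    · intro ha
      exact ⟨Finset.mem_univ a, Finset.disjoint_right.mp hdT ha⟩
    · intro ha
      rcases Finset.mem_union.mp (hTfull ▸ Finset.mem_univ a) with h' | h'
      · exact absurd h' ha.2
      · exact h'
  rw [← hTn', hTval, G.zero]
  simp

/-- The delta-matroid associated with a `Good` function. -/
noncomputable def toDM (G : Good n h) : DeltaMatroid n where
  feas := feasOf h
  nonempty := feasOf_nonempty G
  exchange := by
    intro F₁ hF₁ F₂ hF₂ x hx
    obtain ⟨y, hy, hval⟩ := exchange_full G F₁ F₂ (mem_feasOf.mp hF₁) (mem_feasOf.mp hF₂) x hx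
    exact ⟨y, hy, mem_feasOf.mpr hval⟩

/-- `2h ≥ fz F + |S|` for every feasible `F`. -/
lemma h_ge_fz (G : Good n h) {Sp Sn F : Finset (Fin n)} (hd : Disjoint Sp Sn)
    (hF : F ∈ feasOf h) :
    fz F Sp Sn + (Sp.card : ℤ) + (Sn.card : ℤ) ≤ 2 * h Sp Sn := by
  have hFval := mem_feasOf.mp hF
  have hFfull : h F (Finset.univ \ F) = (F.card : ℤ) + (Finset.univ \ F).card := by
    rw [hFval, Finset.card_sdiff_of_subset (Finset.subset_univ F), Finset.card_univ, Fintype.card_fin]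
    have hle : F.card ≤ n := by simpa using Finset.card_le_univ F
    push_cast
    omega
  have hC : h (Sp ∩ F) (Sn \ F) = ((Sp ∩ F).card : ℤ) + ((Sn \ F).card : ℤ) :=
    fullrank_down G Finset.inter_subset_right
      (fun a ha => Finset.mem_sdiff.mpr ⟨Finset.mem_univ a, (Finset.mem_sdiff.mp ha).2⟩)
      Finset.disjoint_sdiff hFfull
  have hmono : h (Sp ∩ F) (Sn \ F) ≤ h Sp Sn :=
    (mono_both G Finset.inter_subset_left Finset.sdiff_subset hd).1
  have hfz := fz_eq F Sp Sn hd
  have c1 : (Sp ∩ F).card + (Sp \ F).card = Sp.card := Finset.card_inter_add_card_sdiff Sp F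
  have c2 : (Sn ∩ F).card + (Sn \ F).card = Sn.card := Finset.card_inter_add_card_sdiff Sn F
  push_cast at c1 c2
  omega

/-- `2h ≤ fz F + |S|` for a suitable feasible `F`. -/
lemma h_le_fz (G : Good n h) {Sp Sn : Finset (Fin n)} (hd : Disjoint Sp Sn) :
    ∃ F ∈ feasOf h, 2 * h Sp Sn ≤ fz F Sp Sn + (Sp.card : ℤ) + (Sn.card : ℤ) := by
  obtain ⟨Tp, Tn, hTp, hTn, hdT, hTfull, hTval⟩ :=
    extend_full G (Finset.univ \ (Sp ∪ Sn)).card Sp Sn hd rfl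
  have hTn' : Tn = Finset.univ \ Tp := by
    ext a
    rw [Finset.mem_sdiff]
    constructor
    · intro ha
      exact ⟨Finset.mem_univ a, Finset.disjoint_right.mp hdT ha⟩
    · intro ha
      rcases Finset.mem_union.mp (hTfull ▸ Finset.mem_univ a) with h' | h'
      · exact absurd h' ha.2
      · exact h'
  have hTcards : (Tp.card : ℤ) + Tn.card = n := by
    have := Finset.card_union_of_disjoint hdT
    rw [hTfull, Finset.card_univ, Fintype.card_fin] at this
    push_cast
    omega
  have hub : h Tp Tn ≤ (n : ℤ) := by
    have := h_le_card G hdT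
    omega
  have hlb : 0 ≤ h Tp Tn := h_nonneg G hdT
  set k : ℕ := ((n : ℤ) - h Tp Tn).toNat with hk
  have hkval : h Tp Tn = (n : ℤ) - k := by
    rw [hk]
    omega
  obtain ⟨F, hFval, hFdist⟩ := near_feasible G k Tp Tn hdT hTfull hkval
  refine ⟨F, mem_feasOf.mpr hFval, ?_⟩
  -- |Sp \ F| + |Sn ∩ F| ≤ |Tp ∆ F| ≤ k
  have hsub1 : Sp \ F ⊆ Tp \ F := fun a ha =>
    Finset.mem_sdiff.mpr ⟨hTp (Finset.mem_sdiff.mp ha).1, (Finset.mem_sdiff.mp ha).2⟩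
  have hsub2 : Sn ∩ F ⊆ F \ Tp := by
    intro a ha
    rw [Finset.mem_inter] at ha
    rw [Finset.mem_sdiff]
    refine ⟨ha.2, fun hh => ?_⟩
    exact Finset.disjoint_left.mp hdT hh (hTn ha.1)
  have hdisj : Disjoint (Sp \ F) (Sn ∩ F) := by
    rw [Finset.disjoint_left]
    intro a ha hb
    exact (Finset.mem_sdiff.mp ha).2 (Finset.mem_inter.mp hb).2
  have hunion : (Sp \ F) ∪ (Sn ∩ F) ⊆ Tp ∆ F := by
    intro a ha
    rw [Finset.mem_symmDiff]
    rcases Finset.mem_union.mp ha with ha' | ha'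
    · have := hsub1 ha'
      rw [Finset.mem_sdiff] at this
      exact Or.inl this
    · have := hsub2 ha'
      rw [Finset.mem_sdiff] at this
      exact Or.inr this
  have hcard1 : (Sp \ F).card + (Sn ∩ F).card ≤ (Tp ∆ F).card := by
    rw [← Finset.card_union_of_disjoint hdisj]
    exact Finset.card_le_card hunion
  have hfz := fz_eq F Sp Sn hd
  have c1 : (Sp ∩ F).card + (Sp \ F).card = Sp.card := Finset.card_inter_add_card_sdiff Sp F
  have c2 : (Sn ∩ F).card + (Sn \ F).card = Sn.card := Finset.card_inter_add_card_sdiff Sn F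
  push_cast at c1 c2 hcard1
  omega

/-- The value identity for the constructed delta-matroid. -/
lemma toDM_value (G : Good n h) {Sp Sn : Finset (Fin n)} (hd : Disjoint Sp Sn) :
    2 * h Sp Sn = (toDM G).g Sp Sn + (Sp.card : ℤ) + (Sn.card : ℤ) := by
  have hg : (toDM G).g Sp Sn = (feasOf h).sup' (feasOf_nonempty G) (fun F => fz F Sp Sn) :=
    g_eq_sup' (toDM G) hd
  refine le_antisymm ?_ ?_
  · obtain ⟨F, hF, hle⟩ := h_le_fz G hd
    have := Finset.le_sup' (fun F => fz F Sp Sn) hF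
    omega
  · have hall : ∀ F ∈ feasOf h, fz F Sp Sn ≤ 2 * h Sp Sn - Sp.card - Sn.card := by
      intro F hF
      have := h_ge_fz G hd hF
      omega
    have := Finset.sup'_le (feasOf_nonempty G) (fun F => fz F Sp Sn) hall
    omega
end DMChar

/-- **Corollary (characterization of `h_D`).** A function `h` on admissible sets on `[n]` equals
`h_D = (g_D + |·|)/2` for some delta-matroid `D` if and only if `h(∅) = 0`, `h(S) ∈ {0, 1}`
for `|S| = 1`, and `h(S) + h(T) ≥ h(S ⊓ T) + h(S ⊔ T) + |S ∩ T̄|/2` (stated in doubled form). -/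
theorem deltaMatroid_h_characterization (n : ℕ)
    (h : Finset (Fin n) → Finset (Fin n) → ℤ) :
    (∃ D : DeltaMatroid n, ∀ Sp Sn : Finset (Fin n), Disjoint Sp Sn →
        2 * h Sp Sn = D.g Sp Sn + (Sp.card : ℤ) + (Sn.card : ℤ)) ↔
      (h ∅ ∅ = 0 ∧
        (∀ Sp Sn : Finset (Fin n), Disjoint Sp Sn → Sp.card + Sn.card = 1 →
          h Sp Sn = 0 ∨ h Sp Sn = 1) ∧
        (∀ Sp Sn Tp Tn : Finset (Fin n), Disjoint Sp Sn → Disjoint Tp Tn →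
          2 * h (Sp ∩ Tp) (Sn ∩ Tn)
              + 2 * h ((Sp ∪ Tp) \ (Sn ∪ Tn)) ((Sn ∪ Tn) \ (Sp ∪ Tp))
              + ((Sp ∩ Tn).card : ℤ) + ((Sn ∩ Tp).card : ℤ)
            ≤ 2 * h Sp Sn + 2 * h Tp Tn)) := by
  constructor
  · rintro ⟨D, hyp⟩
    refine ⟨?_, ?_, ?_⟩
    · have h0 := hyp ∅ ∅ (by simp)
      rw [DMChar.forward_empty D] at h0
      simp only [Finset.card_empty, Nat.cast_zero] at h0
      omega
    · intro Sp Sn hd hc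
      have h1 := hyp Sp Sn hd
      have h2 := DMChar.forward_single D hd hc
      have hcast : (Sp.card : ℤ) + Sn.card = 1 := by exact_mod_cast hc
      rcases h2 with h2 | h2 <;> omega
    · intro Sp Sn Tp Tn hdS hdT
      have hdU : Disjoint (Sp ∩ Tp) (Sn ∩ Tn) :=
        Finset.disjoint_left.mpr fun a ha hb =>
          Finset.disjoint_left.mp hdS (Finset.mem_inter.mp ha).1 (Finset.mem_inter.mp hb).1
      have hdV : Disjoint ((Sp ∪ Tp) \ (Sn ∪ Tn)) ((Sn ∪ Tn) \ (Sp ∪ Tp)) :=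
        disjoint_sdiff_sdiff
      have e1 := hyp _ _ hdU
      have e2 := hyp _ _ hdV
      have e3 := hyp Sp Sn hdS
      have e4 := hyp Tp Tn hdT
      have hbi := DMChar.forward_bisub D hdS hdT
      have hcm := DMChar.card_mod Sp Sn Tp Tn hdS hdT
      omega
  · rintro ⟨hz, hs, hb⟩
    have G : DMChar.Good n h := ⟨hz, hs, hb⟩
    exact ⟨DMChar.toDM G, fun Sp Sn hd => DMChar.toDM_value G hd⟩
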